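/- Suppose the pair (A,B) is controllable and the system is (Q,S,R)-dissipative. Then there exists a symmetric matrix P ∈ ℝ^{n×n} such that the dissipation matrix satisfies K(P) ⪯ 0 (negative semidefinite). -/

import Mathlib

open Matrix

/-- `M ⪯ 0`: a real matrix is negative semidefinite iff `-M` is positive semidefinite. -/
def Matrix.NegSemidef {k : Type*} [Fintype k] (M : Matrix k k ℝ) : Prop :=
  (-M).PosSemidef

/-- Quadratic supply rate `s(u,y) = uᵀRu + uᵀSᵀy + yᵀSu + yᵀQy`. -/
noncomputable def supplyRate {m p : ℕ} (R : Matrix (Fin m) (Fin m) ℝ)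
    (S : Matrix (Fin p) (Fin m) ℝ) (Q : Matrix (Fin p) (Fin p) ℝ)
    (u : Fin m → ℝ) (y : Fin p → ℝ) : ℝ :=
  u ⬝ᵥ R.mulVec u + u ⬝ᵥ Sᵀ.mulVec y + y ⬝ᵥ S.mulVec u + y ⬝ᵥ Q.mulVec y

/-- The dissipation matrix `K(P)`. -/
noncomputable def dissipationMatrix {n m p : ℕ}
    (A : Matrix (Fin n) (Fin n) ℝ) (B : Matrix (Fin n) (Fin m) ℝ)
    (C : Matrix (Fin p) (Fin n) ℝ) (D : Matrix (Fin p) (Fin m) ℝ)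
    (R : Matrix (Fin m) (Fin m) ℝ) (S : Matrix (Fin p) (Fin m) ℝ)
    (Q : Matrix (Fin p) (Fin p) ℝ)
    (P : Matrix (Fin n) (Fin n) ℝ) : Matrix (Fin n ⊕ Fin m) (Fin n ⊕ Fin m) ℝ :=
  Matrix.fromBlocks
    (Aᵀ * P * A - P - Cᵀ * Q * C)
    (Aᵀ * P * B - (Cᵀ * S + Cᵀ * Q * D))
    (Aᵀ * P * B - (Cᵀ * S + Cᵀ * Q * D))ᵀ
    (Bᵀ * P * B - (Dᵀ * Q * D + Dᵀ * S + Sᵀ * D + R))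

/-- The controllability matrix `[B, AB, …, A^{n−1}B]`, with columns indexed by
`Fin n × Fin m` (column `(j, k)` is the `k`-th column of `A^j * B`). -/
noncomputable def controllabilityMatrix {n m : ℕ}
    (A : Matrix (Fin n) (Fin n) ℝ) (B : Matrix (Fin n) (Fin m) ℝ) :
    Matrix (Fin n) (Fin n × Fin m) ℝ :=
  Matrix.of fun i jk => (A ^ (jk.1 : ℕ) * B) i jk.2


open RealInnerProductSpace Filter

section QP
variable {E F : Type*} [NormedAddCommGroup E]
    [InnerProductSpace ℝ E] [FiniteDimensional ℝ E]
    [AddCommGroup F] [Module ℝ F]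

lemma qp_expand (T : E →ₗ[ℝ] E) (hT : ∀ v w : E, ⟪T v, w⟫ = ⟪v, T w⟫)
    (v w : E) : ⟪v + w, T (v + w)⟫ = ⟪v, T v⟫ + 2 * ⟪v, T w⟫ + ⟪w, T w⟫ := by
  have h1 : ⟪w, T v⟫ = ⟪v, T w⟫ := by rw [← hT]; exact real_inner_comm _ _
  rw [map_add, inner_add_left, inner_add_right, inner_add_right, h1]; ring

lemma qp_exists_linear_minimizer
    (T : E →ₗ[ℝ] E) (hT : ∀ v w : E, ⟪T v, w⟫ = ⟪v, T w⟫)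
    (L : E →ₗ[ℝ] F) (hL : Function.Surjective L)
    (hbdd : ∀ x : F, ∃ c : ℝ, ∀ w : E, L w = x → c ≤ ⟪w, T w⟫) :
    ∃ G : F →ₗ[ℝ] E, (∀ x, L (G x) = x) ∧
      ∀ w : E, ⟪G (L w), T (G (L w))⟫ ≤ ⟪w, T w⟫ := by
  classical
  have hsymm : ∀ v w : E, ⟪w, T v⟫ = ⟪v, T w⟫ := by
    intro v w; rw [← hT]; exact real_inner_comm _ _
  set K : Submodule ℝ E := LinearMap.ker L with hK
  -- Step A: quadratic form nonneg on kernel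
  have hq : ∀ k ∈ K, (0:ℝ) ≤ ⟪k, T k⟫ := by
    intro k hk
    by_contra h
    push_neg at h
    obtain ⟨c, hc⟩ := hbdd 0
    have key : ∀ t : ℝ, c ≤ t^2 * ⟪k, T k⟫ := by
      intro t
      have h1 := hc (t • k) (by simp [LinearMap.mem_ker.mp hk])
      have h2 : ⟪t • k, T (t • k)⟫ = t^2 * ⟪k, T k⟫ := by
        rw [LinearMap.map_smul, real_inner_smul_left, real_inner_smul_right]; ring
      linarith [h2 ▸ h1]
    set q : ℝ := ⟪k, T k⟫
    have hqpos : 0 < -q := by linarith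
    set t : ℝ := Real.sqrt ((|c|+1) / (-q)) with ht
    have ht2 : t^2 = (|c|+1)/(-q) := Real.sq_sqrt (by positivity)
    have h3 := key t
    rw [ht2] at h3
    have h4 : (|c|+1)/(-q) * q = -(|c|+1) := by
      rw [div_mul_eq_mul_div, div_eq_iff hqpos.ne']; ring
    nlinarith [abs_nonneg c, neg_abs_le c]
  -- Step B: degenerate kernel directions are in ker T
  have hker : ∀ k ∈ K, ⟪k, T k⟫ = 0 → T k = 0 := by
    intro k hk hk0
    have hall : ∀ w : E, ⟪w, T k⟫ = 0 := by
      intro w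
      by_contra ha
      obtain ⟨c, hc⟩ := hbdd (L w)
      have key : ∀ t : ℝ, c ≤ ⟪w, T w⟫ + 2*(t*⟪w, T k⟫) := by
        intro t
        have h1 := hc (w + t • k) (by simp [LinearMap.mem_ker.mp hk])
        have h2 : ⟪w + t • k, T (w + t • k)⟫ = ⟪w, T w⟫ + 2*(t*⟪w, T k⟫) := by
          rw [qp_expand T hT, LinearMap.map_smul, real_inner_smul_right,
            real_inner_smul_left, real_inner_smul_right, hk0]
          ring
        linarith [h2 ▸ h1]
      have h5 := key ((c - ⟪w, T w⟫ - 1)/(2*⟪w, T k⟫))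
      have h6 : (c - ⟪w, T w⟫ - 1)/(2*⟪w, T k⟫) * ⟪w, T k⟫ = (c - ⟪w, T w⟫ - 1)/2 := by
        field_simp
      rw [h6] at h5
      linarith
    have := hall (T k)
    rwa [real_inner_self_eq_norm_sq, pow_eq_zero_iff (two_ne_zero), norm_eq_zero] at this
  -- The solution space: w with T w ⟂ K
  set Sol : Submodule ℝ E := Submodule.comap T Kᗮ with hSol
  have hSolmem : ∀ w : E, w ∈ Sol ↔ ∀ k ∈ K, ⟪k, T w⟫ = 0 :=
    fun w => Submodule.mem_orthogonal K (T w)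
  -- Step C: L restricted to Sol is surjective
  have hsurj : ∀ x : F, ∃ w ∈ Sol, L w = x := by
    intro x
    obtain ⟨ws, hws⟩ := hL x
    set Pk : E →ₗ[ℝ] K := K.orthogonalProjectionOnto.toLinearMap with hPk
    set Sop : K →ₗ[ℝ] K := Pk ∘ₗ (T ∘ₗ K.subtype) with hSop
    have hPkinner : ∀ (v : E) (k : K), ⟪((Pk v : K) : E), (k : E)⟫ = ⟪v, (k : E)⟫ := by
      intro v k
      have h2 : ⟪v - (K.orthogonalProjectionOnto v : E), (k : E)⟫ = 0 :=
        Submodule.inner_left_of_mem_orthogonal k.2 (K.sub_starProjection_mem_orthogonal v)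
      have := inner_sub_left (𝕜 := ℝ) v (K.orthogonalProjectionOnto v : E) (k : E)
      rw [this] at h2
      simp only [hPk, ContinuousLinearMap.coe_coe]
      linarith
    have hSopApply : ∀ (a b : K), ⟪(Sop a : E), (b : E)⟫ = ⟪T (a : E), (b : E)⟫ := by
      intro a b
      exact hPkinner (T (a : E)) b
    -- kernel of Sop is killed by T
    have hkerS : ∀ a : K, Sop a = 0 → T (a : E) = 0 := by
      intro a ha
      apply hker _ a.2
      have := hSopApply a a
      rw [ha] at this
      simp only [Submodule.coe_zero, inner_zero_left] at this
      rw [real_inner_comm]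
      exact this.symm
    -- range Sop = (ker Sop)ᗮ (within K)
    have hle : LinearMap.range Sop ≤ (LinearMap.ker Sop)ᗮ := by
      rintro _ ⟨a, rfl⟩
      rw [Submodule.mem_orthogonal]
      intro b hb
      have h1 : ⟪(Sop b : E), (a : E)⟫ = 0 := by
        rw [LinearMap.mem_ker.mp hb]; simp
      have h2 : ⟪(b : E), T (a : E)⟫ = 0 := by
        rw [hSopApply b a] at h1
        rw [← hT]
        exact h1
      -- ⟪b, Sop a⟫ = ⟪Sop a, b⟫... need inner in K
      have h3 : ⟪(Sop a : E), (b : E)⟫ = 0 := by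
        rw [hSopApply a b, real_inner_comm]; exact h2
      rw [Submodule.coe_inner, real_inner_comm]
      exact h3
    have hrange : LinearMap.range Sop = (LinearMap.ker Sop)ᗮ := by
      apply Submodule.eq_of_le_of_finrank_eq hle
      have h1 := LinearMap.finrank_range_add_finrank_ker Sop
      have h2 := Submodule.finrank_add_finrank_orthogonal (𝕜 := ℝ) (LinearMap.ker Sop)
      omega
    -- the target
    have htarget : -(Pk (T ws)) ∈ (LinearMap.ker Sop)ᗮ := by
      rw [Submodule.mem_orthogonal]
      intro b hb
      have hTb : T (b : E) = 0 := hkerS b (LinearMap.mem_ker.mp hb)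
      have : ⟪((Pk (T ws) : K) : E), (b : E)⟫ = ⟪T ws, (b : E)⟫ := hPkinner _ b
      rw [Submodule.coe_inner, Submodule.coe_neg, inner_neg_right, neg_eq_zero,
        real_inner_comm, this, hT, hTb, inner_zero_right]
    rw [← hrange] at htarget
    obtain ⟨k₀, hk₀⟩ := htarget
    refine ⟨ws + (k₀ : E), ?_, by simp [hws, LinearMap.mem_ker.mp k₀.2]⟩
    rw [hSolmem]
    intro k hk
    have h1 : ⟪k, T (ws + (k₀ : E))⟫ = ⟪T ws + T (k₀:E), k⟫ := by
      rw [map_add]; exact real_inner_comm _ _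
    have h2 : ⟪T ws + T (k₀:E), k⟫ = ⟪((Pk (T ws + T (k₀:E)) : K) : E), k⟫ :=
      (hPkinner (T ws + T (k₀:E)) ⟨k, hk⟩).symm
    have h3 : Pk (T ws + T (k₀ : E)) = 0 := by
      have : Pk (T (k₀ : E)) = Sop k₀ := by simp [hSop]
      rw [map_add, this, hk₀]
      simp
    rw [h1, h2, h3]
    simp
  -- right inverse
  set L' : Sol →ₗ[ℝ] F := L ∘ₗ Sol.subtype with hL'
  have hL'surj : LinearMap.range L' = ⊤ := by
    rw [LinearMap.range_eq_top]
    intro x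
    obtain ⟨w, hw, hlw⟩ := hsurj x
    exact ⟨⟨w, hw⟩, hlw⟩
  obtain ⟨G', hG'⟩ := LinearMap.exists_rightInverse_of_surjective L' hL'surj
  refine ⟨Sol.subtype ∘ₗ G', ?_, ?_⟩
  · intro x
    have := congrArg (fun f => f x) hG'
    simpa [hL'] using this
  · intro w
    set g : E := Sol.subtype (G' (L w)) with hg
    have hgSol : g ∈ Sol := (G' (L w)).2
    have hgL : L g = L w := by
      have := congrArg (fun f => f (L w)) hG'
      simpa [hL', hg] using this
    have hd : w - g ∈ K := by
      rw [LinearMap.mem_ker, map_sub, hgL, sub_self]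
    have hexp : ⟪w, T w⟫ = ⟪g, T g⟫ + 2*⟪g, T (w - g)⟫ + ⟪w - g, T (w - g)⟫ := by
      have := qp_expand T hT g (w - g)
      rw [show g + (w - g) = w by abel] at this
      exact this
    have hcross : ⟪g, T (w - g)⟫ = 0 := by
      rw [← hsymm]
      exact (hSolmem g).mp hgSol (w - g) hd
    have hpos := hq (w - g) hd
    show ⟪g, T g⟫ ≤ ⟪w, T w⟫
    rw [hexp, hcross]
    linarith

end QP

namespace LMIKey
lemma dotT {a b : ℕ} (M : Matrix (Fin a) (Fin b) ℝ) (v : Fin b → ℝ) (w : Fin a → ℝ) :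
    v ⬝ᵥ Mᵀ.mulVec w = (M.mulVec v) ⬝ᵥ w := by
  rw [dotProduct_mulVec, Matrix.vecMul_transpose]

lemma key_identity {n m p : ℕ}
    (A : Matrix (Fin n) (Fin n) ℝ) (B : Matrix (Fin n) (Fin m) ℝ)
    (C : Matrix (Fin p) (Fin n) ℝ) (D : Matrix (Fin p) (Fin m) ℝ)
    (R : Matrix (Fin m) (Fin m) ℝ) (S : Matrix (Fin p) (Fin m) ℝ)
    (Q : Matrix (Fin p) (Fin p) ℝ) (P : Matrix (Fin n) (Fin n) ℝ)
    (hP : Pᵀ = P) (hQ : Qᵀ = Q) (x : Fin n → ℝ) (u : Fin m → ℝ) :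
    (Sum.elim x u) ⬝ᵥ (dissipationMatrix A B C D R S Q P).mulVec (Sum.elim x u)
      = (A.mulVec x + B.mulVec u) ⬝ᵥ P.mulVec (A.mulVec x + B.mulVec u)
        - x ⬝ᵥ P.mulVec x - supplyRate R S Q u (C.mulVec x + D.mulVec u) := by
  have htr : (Aᵀ * P * B - (Cᵀ * S + Cᵀ * Q * D))ᵀ
      = Bᵀ * P * A - (Sᵀ * C + Dᵀ * Q * C) := by
    simp [Matrix.transpose_sub, Matrix.transpose_add, Matrix.transpose_mul,
      Matrix.transpose_transpose, hP, hQ, Matrix.mul_assoc]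
  rw [dissipationMatrix, htr, Matrix.fromBlocks_mulVec, Sum.elim_comp_inl,
    Sum.elim_comp_inr, sumElim_dotProduct_sumElim]
  simp only [Matrix.sub_mulVec, Matrix.add_mulVec, dotProduct_sub,
    dotProduct_add, ← Matrix.mulVec_mulVec, supplyRate, Matrix.mulVec_add,
    add_dotProduct, dotT]
  simp only [dotProduct_comm (B.mulVec u), dotProduct_comm (C.mulVec x),
    dotProduct_comm (D.mulVec u)]
  ring

lemma kp_negSemidef {n m p : ℕ}
    (A : Matrix (Fin n) (Fin n) ℝ) (B : Matrix (Fin n) (Fin m) ℝ)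
    (C : Matrix (Fin p) (Fin n) ℝ) (D : Matrix (Fin p) (Fin m) ℝ)
    (R : Matrix (Fin m) (Fin m) ℝ) (S : Matrix (Fin p) (Fin m) ℝ)
    (Q : Matrix (Fin p) (Fin p) ℝ) (P : Matrix (Fin n) (Fin n) ℝ)
    (hP : Pᵀ = P) (hQ : Qᵀ = Q) (hR : Rᵀ = R)
    (hd : ∀ (x : Fin n → ℝ) (u : Fin m → ℝ),
      (A.mulVec x + B.mulVec u) ⬝ᵥ P.mulVec (A.mulVec x + B.mulVec u)
        ≤ x ⬝ᵥ P.mulVec x + supplyRate R S Q u (C.mulVec x + D.mulVec u)) :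
    (-(dissipationMatrix A B C D R S Q P)).PosSemidef := by
  refine Matrix.PosSemidef.of_dotProduct_mulVec_nonneg ?_ ?_
  · rw [Matrix.IsHermitian, conjTranspose_eq_transpose_of_trivial,
      Matrix.transpose_neg, neg_inj, dissipationMatrix, Matrix.fromBlocks_transpose]
    simp only [Matrix.transpose_sub, Matrix.transpose_add, Matrix.transpose_mul,
      Matrix.transpose_transpose, hP, hQ, hR, Matrix.mul_assoc]
    congr 1
    abel
  · intro z
    have hz : star z = z := by simp
    rw [hz, Matrix.neg_mulVec, dotProduct_neg]
    have hzz : z = Sum.elim (z ∘ Sum.inl) (z ∘ Sum.inr) := (Sum.elim_comp_inl_inr z).symm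
    rw [hzz, key_identity A B C D R S Q P hP hQ]
    have := hd (z ∘ Sum.inl) (z ∘ Sum.inr)
    linarith

end LMIKey


namespace LMIProof

variable {n m p : ℕ} (A : Matrix (Fin n) (Fin n) ℝ) (B : Matrix (Fin n) (Fin m) ℝ)
    (C : Matrix (Fin p) (Fin n) ℝ) (D : Matrix (Fin p) (Fin m) ℝ)
    (R : Matrix (Fin m) (Fin m) ℝ) (S : Matrix (Fin p) (Fin m) ℝ)
    (Q : Matrix (Fin p) (Fin p) ℝ)

/-- State trajectory starting from `0` driven by input `u`. -/
noncomputable def traj (u : ℕ → Fin m → ℝ) : ℕ → Fin n → ℝ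
  | 0 => 0
  | k+1 => A.mulVec (traj u k) + B.mulVec (u k)

lemma traj_succ (u : ℕ → Fin m → ℝ) (k : ℕ) :
    traj A B u (k+1) = A.mulVec (traj A B u k) + B.mulVec (u k) := rfl

lemma traj_zero' (u : ℕ → Fin m → ℝ) : traj A B u 0 = 0 := rfl

lemma traj_zero : traj A B (fun _ => (0 : Fin m → ℝ)) = fun _ => 0 := by
  funext k
  induction k with
  | zero => simp [traj]
  | succ k ih => simp [traj, ih]

lemma traj_add (u v : ℕ → Fin m → ℝ) (k : ℕ) :
    traj A B (u + v) k = traj A B u k + traj A B v k := by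
  induction k with
  | zero => simp [traj]
  | succ k ih =>
      simp only [traj, ih, Matrix.mulVec_add, Pi.add_apply]
      abel

lemma traj_smul (c : ℝ) (u : ℕ → Fin m → ℝ) (k : ℕ) :
    traj A B (c • u) k = c • traj A B u k := by
  induction k with
  | zero => simp [traj]
  | succ k ih =>
      simp only [traj, ih, Pi.smul_apply, Matrix.mulVec_smul, smul_add]

lemma traj_congr (u v : ℕ → Fin m → ℝ) (k : ℕ) (h : ∀ i < k, u i = v i) :
    traj A B u k = traj A B v k := by
  induction k with
  | zero => simp [traj]
  | succ k ih =>
      simp only [traj]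
      rw [ih (fun i hi => h i (Nat.lt_succ_of_lt hi)), h k (Nat.lt_succ_self k)]

/-- Extend a finite-horizon input to all times (zero outside). -/
noncomputable def extIn (N : ℕ) (w : EuclideanSpace ℝ (Fin N × Fin m)) : ℕ → Fin m → ℝ :=
  fun k j => if h : k < N then w (⟨k, h⟩, j) else 0

lemma extIn_add (N : ℕ) (w v : EuclideanSpace ℝ (Fin N × Fin m)) :
    extIn N (w + v) = extIn N w + extIn N v := by
  funext k j
  by_cases h : k < N <;> simp [extIn, h]

lemma extIn_smul (N : ℕ) (c : ℝ) (w : EuclideanSpace ℝ (Fin N × Fin m)) :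
    extIn N (c • w) = c • extIn N w := by
  funext k j
  by_cases h : k < N <;> simp [extIn, h]

/-- Final state map as a linear map. -/
noncomputable def finalState (N : ℕ) :
    EuclideanSpace ℝ (Fin N × Fin m) →ₗ[ℝ] (Fin n → ℝ) where
  toFun w := traj A B (extIn N w) N
  map_add' w v := by
    show traj A B (extIn N (w + v)) N = _
    rw [extIn_add, traj_add]
  map_smul' c w := by
    show traj A B (extIn N (c • w)) N = _
    rw [extIn_smul, traj_smul]
    rfl

/-- Output along the extended trajectory. -/
noncomputable def outSig (N : ℕ) (w : EuclideanSpace ℝ (Fin N × Fin m)) (i : ℕ) :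
    Fin p → ℝ :=
  C.mulVec (traj A B (extIn N w) i) + D.mulVec (extIn N w i)

lemma finalState_apply (N : ℕ) (w : EuclideanSpace ℝ (Fin N × Fin m)) :
    finalState A B N w = traj A B (extIn N w) N := rfl

lemma outSig_add (N : ℕ) (w v : EuclideanSpace ℝ (Fin N × Fin m)) (i : ℕ) :
    outSig A B C D N (w + v) i = outSig A B C D N w i + outSig A B C D N v i := by
  simp only [outSig, extIn_add, traj_add, Pi.add_apply, Matrix.mulVec_add]
  abel

lemma outSig_smul (N : ℕ) (c : ℝ) (w : EuclideanSpace ℝ (Fin N × Fin m)) (i : ℕ) :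
    outSig A B C D N (c • w) i = c • outSig A B C D N w i := by
  simp only [outSig, extIn_smul, traj_smul, Pi.smul_apply, Matrix.mulVec_smul, smul_add]

/-- The total supply as a bilinear form on finite-horizon inputs. -/
noncomputable def costB (N : ℕ) :
    EuclideanSpace ℝ (Fin N × Fin m) →ₗ[ℝ] EuclideanSpace ℝ (Fin N × Fin m) →ₗ[ℝ] ℝ :=
  LinearMap.mk₂ ℝ (fun v w => ∑ i ∈ Finset.range N,
      (extIn N v i ⬝ᵥ R.mulVec (extIn N w i)
        + extIn N v i ⬝ᵥ Sᵀ.mulVec (outSig A B C D N w i)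
        + outSig A B C D N v i ⬝ᵥ S.mulVec (extIn N w i)
        + outSig A B C D N v i ⬝ᵥ Q.mulVec (outSig A B C D N w i)))
    (fun v v' w => by
      simp only [extIn_add, outSig_add, Pi.add_apply, add_dotProduct,
        ← Finset.sum_add_distrib]
      exact Finset.sum_congr rfl fun i _ => by ring)
    (fun c v w => by
      simp only [extIn_smul, outSig_smul, Pi.smul_apply, smul_dotProduct,
        smul_eq_mul]
      rw [Finset.mul_sum]
      exact Finset.sum_congr rfl fun i _ => by ring)
    (fun v w w' => by
      simp only [extIn_add, outSig_add, Pi.add_apply, Matrix.mulVec_add,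
        dotProduct_add, ← Finset.sum_add_distrib]
      exact Finset.sum_congr rfl fun i _ => by ring)
    (fun c v w => by
      simp only [extIn_smul, outSig_smul, Pi.smul_apply, Matrix.mulVec_smul,
        dotProduct_smul, smul_eq_mul]
      rw [Finset.mul_sum]
      exact Finset.sum_congr rfl fun i _ => by ring)

lemma costB_self (N : ℕ) (w : EuclideanSpace ℝ (Fin N × Fin m)) :
    costB A B C D R S Q N w w
      = ∑ i ∈ Finset.range N, supplyRate R S Q (extIn N w i) (outSig A B C D N w i) := by
  simp [costB, supplyRate]

lemma dot_mulVec_comm {a b : ℕ} (M : Matrix (Fin a) (Fin b) ℝ) (x : Fin a → ℝ)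
    (y : Fin b → ℝ) : x ⬝ᵥ M.mulVec y = y ⬝ᵥ Mᵀ.mulVec x := by
  rw [Matrix.mulVec_transpose, dotProduct_mulVec, dotProduct_comm]

lemma costB_comm (hR : R.IsSymm) (hQ : Q.IsSymm) (N : ℕ)
    (v w : EuclideanSpace ℝ (Fin N × Fin m)) :
    costB A B C D R S Q N v w = costB A B C D R S Q N w v := by
  simp only [costB, LinearMap.mk₂_apply]
  refine Finset.sum_congr rfl fun i _ => ?_
  have e1 : extIn N v i ⬝ᵥ R.mulVec (extIn N w i)
      = extIn N w i ⬝ᵥ R.mulVec (extIn N v i) := by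
    rw [dot_mulVec_comm, hR.eq]
  have e2 : extIn N v i ⬝ᵥ Sᵀ.mulVec (outSig A B C D N w i)
      = outSig A B C D N w i ⬝ᵥ S.mulVec (extIn N v i) := by
    rw [dot_mulVec_comm, Matrix.transpose_transpose]
  have e3 : outSig A B C D N v i ⬝ᵥ S.mulVec (extIn N w i)
      = extIn N w i ⬝ᵥ Sᵀ.mulVec (outSig A B C D N v i) := by
    rw [dot_mulVec_comm]
  have e4 : outSig A B C D N v i ⬝ᵥ Q.mulVec (outSig A B C D N w i)
      = outSig A B C D N w i ⬝ᵥ Q.mulVec (outSig A B C D N v i) := by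
    rw [dot_mulVec_comm, hQ.eq]
  rw [e1, e2, e3, e4]
  ring


/-- Decomposition of a Euclidean vector into coordinate singles. -/
lemma euclid_decomp {ι : Type*} [Fintype ι] [DecidableEq ι] (v : EuclideanSpace ℝ ι) :
    v = ∑ i, v i • EuclideanSpace.single i (1:ℝ) := by
  ext j
  rw [WithLp.ofLp_sum, Fintype.sum_apply]
  simp [EuclideanSpace.single_apply]

/-- Turn a bilinear form on Euclidean space into an operator representing it. -/
noncomputable def opOfBilin {ι : Type*} [Fintype ι] [DecidableEq ι]
    (b : EuclideanSpace ℝ ι →ₗ[ℝ] EuclideanSpace ℝ ι →ₗ[ℝ] ℝ) :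
    EuclideanSpace ℝ ι →ₗ[ℝ] EuclideanSpace ℝ ι where
  toFun w := WithLp.toLp 2 (fun i => b (EuclideanSpace.single i 1) w)
  map_add' v w := by ext i; simp
  map_smul' c w := by ext i; simp

lemma inner_opOfBilin {ι : Type*} [Fintype ι] [DecidableEq ι]
    (b : EuclideanSpace ℝ ι →ₗ[ℝ] EuclideanSpace ℝ ι →ₗ[ℝ] ℝ)
    (v w : EuclideanSpace ℝ ι) : ⟪v, opOfBilin b w⟫ = b v w := by
  have h1 : ⟪v, opOfBilin b w⟫ = ∑ i, v i * b (EuclideanSpace.single i 1) w := by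
    simp [PiLp.inner_apply, opOfBilin, RCLike.inner_apply]
    exact Finset.sum_congr rfl fun _ _ => mul_comm _ _
  rw [h1]
  conv_rhs => rw [euclid_decomp v]
  rw [map_sum, LinearMap.sum_apply]
  simp [smul_eq_mul]

/-- Closed form of the trajectory. -/
lemma traj_eq_sum (u : ℕ → Fin m → ℝ) (N : ℕ) :
    traj A B u N = ∑ j ∈ Finset.range N, (A ^ (N - 1 - j) * B).mulVec (u j) := by
  induction N with
  | zero => simp [traj]
  | succ N ih =>
      show A.mulVec (traj A B u N) + B.mulVec (u N) = _
      rw [ih]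
      have hmv : A.mulVec (∑ j ∈ Finset.range N, (A ^ (N - 1 - j) * B).mulVec (u j))
          = ∑ j ∈ Finset.range N, A.mulVec ((A ^ (N - 1 - j) * B).mulVec (u j)) := by
        have h0 := map_sum A.mulVecLin
          (fun j => (A ^ (N - 1 - j) * B).mulVec (u j)) (Finset.range N)
        simp only [Matrix.mulVecLin_apply] at h0
        exact h0
      rw [hmv, Finset.sum_range_succ]
      congr 1
      · refine Finset.sum_congr rfl fun j hj => ?_
        have hj' : j < N := Finset.mem_range.mp hj
        rw [Matrix.mulVec_mulVec,
          show N + 1 - 1 - j = (N - 1 - j) + 1 from by omega, pow_succ',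
          Matrix.mul_assoc]
      · have : N + 1 - 1 - N = 0 := by omega
        rw [this, pow_zero, Matrix.one_mul]


/-- Total supply over the horizon `N`. -/
noncomputable def costQF (N : ℕ) (w : EuclideanSpace ℝ (Fin N × Fin m)) : ℝ :=
  ∑ i ∈ Finset.range N, supplyRate R S Q (extIn N w i) (outSig A B C D N w i)

lemma costB_self' (N : ℕ) (w : EuclideanSpace ℝ (Fin N × Fin m)) :
    costB A B C D R S Q N w w = costQF A B C D R S Q N w :=
  costB_self A B C D R S Q N w

/-- Surjectivity of the controllability map. -/
lemma finalState_surjective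
    (hctrb : (controllabilityMatrix A B).rank = n) (N : ℕ) (hN : n ≤ N) :
    Function.Surjective (finalState A B (m := m) N) := by
  intro x
  -- the controllability matrix has full range
  have hrange : LinearMap.range (controllabilityMatrix A B).mulVecLin = ⊤ := by
    apply Submodule.eq_top_of_finrank_eq
    rw [← Matrix.rank, hctrb]
    simp [Module.finrank_pi]
  obtain ⟨c, hc⟩ : ∃ c, (controllabilityMatrix A B).mulVec c = x := by
    have : x ∈ LinearMap.range (controllabilityMatrix A B).mulVecLin := by
      rw [hrange]; trivial
    obtain ⟨c, hc⟩ := this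
    exact ⟨c, hc⟩
  -- the input sequence
  set w : EuclideanSpace ℝ (Fin N × Fin m) := WithLp.toLp 2 fun q =>
    if h : (N - 1 - (q.1 : ℕ)) < n then c (⟨N - 1 - (q.1 : ℕ), h⟩, q.2) else 0 with hw
  refine ⟨w, ?_⟩
  set F : ℕ → (Fin n → ℝ) := fun i =>
    if h : i < n then (A ^ i * B).mulVec (fun j => c (⟨i, h⟩, j)) else 0 with hF
  have step1 : finalState A B N w = ∑ k ∈ Finset.range N, F (N - 1 - k) := by
    show traj A B (extIn N w) N = _
    rw [traj_eq_sum]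
    refine Finset.sum_congr rfl fun k hk => ?_
    have hkN : k < N := Finset.mem_range.mp hk
    have hext : extIn N w k = fun j =>
        if h : (N - 1 - k) < n then c (⟨N - 1 - k, h⟩, j) else 0 := by
      funext j
      simp only [extIn, hw, dif_pos hkN]
    rw [hext, hF]
    by_cases h : (N - 1 - k) < n
    · simp only [dif_pos h]
    · simp only [dif_neg h]
      have : (fun _ : Fin m => (0:ℝ)) = (0 : Fin m → ℝ) := rfl
      rw [this, Matrix.mulVec_zero]
  have step2 : ∑ k ∈ Finset.range N, F (N - 1 - k) = ∑ i ∈ Finset.range N, F i := by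
    apply Finset.sum_nbij' (fun k => N - 1 - k) (fun i => N - 1 - i)
    · intro a ha; simp only [Finset.mem_range] at *; omega
    · intro a ha; simp only [Finset.mem_range] at *; omega
    · intro a ha; simp only [Finset.mem_range] at ha; omega
    · intro a ha; simp only [Finset.mem_range] at ha; omega
    · intro a ha; rfl
  have step3 : ∑ i ∈ Finset.range N, F i = ∑ i ∈ Finset.range n, F i := by
    symm
    apply Finset.sum_subset (Finset.range_subset_range.mpr hN)
    intro i _ hin
    rw [hF]
    simp only [Finset.mem_range] at hin
    exact dif_neg hin
  have step4 : ∑ i ∈ Finset.range n, F i = (controllabilityMatrix A B).mulVec c := by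
    rw [← Fin.sum_univ_eq_sum_range]
    funext r
    rw [Fintype.sum_apply]
    simp only [hF]
    have : ∀ i : Fin n, (if h : (i:ℕ) < n
        then (A ^ (i:ℕ) * B).mulVec (fun j => c (⟨(i:ℕ), h⟩, j)) else 0) r
        = ∑ j : Fin m, (A ^ (i:ℕ) * B) r j * c (i, j) := by
      intro i
      rw [dif_pos i.isLt]
      simp [Matrix.mulVec, dotProduct]
    rw [Finset.sum_congr rfl fun i _ => this i]
    simp only [Matrix.mulVec, dotProduct, controllabilityMatrix, Matrix.of_apply]
    rw [Fintype.sum_prod_type]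
  rw [step1, step2, step3, step4, hc]

lemma supplyRate_zero : supplyRate R S Q 0 (C.mulVec 0 + D.mulVec 0) = 0 := by
  simp [supplyRate]

/-- Prepending one zero input step. -/
lemma prepend_step (N : ℕ) (w : EuclideanSpace ℝ (Fin N × Fin m)) :
    ∃ w' : EuclideanSpace ℝ (Fin (N+1) × Fin m),
      finalState A B (N+1) w' = finalState A B N w ∧
      costQF A B C D R S Q (N+1) w' = costQF A B C D R S Q N w := by
  classical
  set w' : EuclideanSpace ℝ (Fin (N+1) × Fin m) := WithLp.toLp 2 fun q =>
    if h : 1 ≤ (q.1 : ℕ) then w (⟨(q.1:ℕ) - 1, by omega⟩, q.2) else 0 with hw'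
  have hu0 : extIn (N+1) w' 0 = 0 := by
    funext j
    simp [extIn, hw']
  have husucc : ∀ k : ℕ, extIn (N+1) w' (k+1) = extIn N w k := by
    intro k
    funext j
    by_cases h : k < N
    · simp only [extIn, dif_pos (by omega : k + 1 < N + 1), dif_pos h, hw']
      simp only [dif_pos (by simp : 1 ≤ ((⟨k+1, by omega⟩ : Fin (N+1)) : ℕ))]
      rfl
    · simp only [extIn, dif_neg (by omega : ¬ (k + 1 < N + 1)), dif_neg h]
  have htraj : ∀ k : ℕ, traj A B (extIn (N+1) w') (k+1) = traj A B (extIn N w) k := by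
    intro k
    induction k with
    | zero =>
        rw [traj_succ, hu0, traj_zero']
        simp [traj_zero']
    | succ k ih =>
        rw [traj_succ, ih, husucc, traj_succ]
  refine ⟨w', ?_, ?_⟩
  · rw [finalState_apply, finalState_apply, htraj N]
  · simp only [costQF]
    rw [Finset.sum_range_succ']
    have h0 : supplyRate R S Q (extIn (N+1) w' 0) (outSig A B C D (N+1) w' 0) = 0 := by
      simp only [outSig, hu0, traj_zero']
      simp [supplyRate]
    rw [h0, add_zero]
    refine Finset.sum_congr rfl fun i _ => ?_
    simp only [outSig, husucc, htraj]

/-- Appending one input step. -/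
lemma append_step (N : ℕ) (w : EuclideanSpace ℝ (Fin N × Fin m)) (um : Fin m → ℝ) :
    ∃ w' : EuclideanSpace ℝ (Fin (N+1) × Fin m),
      finalState A B (N+1) w' = A.mulVec (finalState A B N w) + B.mulVec um ∧
      costQF A B C D R S Q (N+1) w' = costQF A B C D R S Q N w
        + supplyRate R S Q um (C.mulVec (finalState A B N w) + D.mulVec um) := by
  classical
  set w' : EuclideanSpace ℝ (Fin (N+1) × Fin m) := WithLp.toLp 2 fun q =>
    if h : (q.1 : ℕ) < N then w (⟨(q.1:ℕ), h⟩, q.2) else um q.2 with hw'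
  have hagree : ∀ k, k < N → extIn (N+1) w' k = extIn N w k := by
    intro k hk
    funext j
    simp only [extIn, dif_pos (by omega : k < N + 1), dif_pos hk, hw']
  have huN : extIn (N+1) w' N = um := by
    funext j
    simp only [extIn, dif_pos (by omega : N < N + 1), hw']
    simp only [dif_neg (show ¬ ((⟨N, by omega⟩ : Fin (N+1)) : ℕ) < N by simp)]
  have htraj : ∀ k, k ≤ N → traj A B (extIn (N+1) w') k = traj A B (extIn N w) k := by
    intro k hk
    apply traj_congr
    intro i hi
    exact hagree i (by omega)
  refine ⟨w', ?_, ?_⟩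
  · rw [finalState_apply, finalState_apply, traj_succ, htraj N le_rfl, huN]
  · simp only [costQF]
    rw [Finset.sum_range_succ]
    congr 1
    · refine Finset.sum_congr rfl fun i hi => ?_
      have hiN : i < N := Finset.mem_range.mp hi
      simp only [outSig, hagree i hiN, htraj i (le_of_lt hiN)]
    · simp only [outSig, huN, htraj N le_rfl, finalState_apply]

/-- A bilinear form on `Fin n → ℝ` is given by a matrix. -/
lemma bilin_eq_matrix (b : (Fin n → ℝ) →ₗ[ℝ] (Fin n → ℝ) →ₗ[ℝ] ℝ)
    (x y : Fin n → ℝ) :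
    b x y = x ⬝ᵥ (Matrix.of fun i j =>
      b (Pi.single i 1) (Pi.single j 1)).mulVec y := by
  classical
  have hdec : ∀ v : Fin n → ℝ, v = ∑ i, v i • (Pi.single i 1 : Fin n → ℝ) := by
    intro v
    funext j
    rw [Fintype.sum_apply]
    simp [Pi.single_apply]
  have hlin : ∀ (f : (Fin n → ℝ) →ₗ[ℝ] ℝ) (v : Fin n → ℝ),
      f v = ∑ i, v i * f (Pi.single i 1) := by
    intro f v
    conv_lhs => rw [hdec v]
    rw [map_sum]
    simp [smul_eq_mul]
  calc b x y = ∑ i, x i * (b (Pi.single i 1) y) := by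
        conv_lhs => rw [hdec x]
        rw [map_sum, LinearMap.sum_apply]
        refine Finset.sum_congr rfl fun i _ => ?_
        rw [LinearMap.map_smul, LinearMap.smul_apply, smul_eq_mul]
    _ = ∑ i, x i * ∑ j, y j * b (Pi.single i 1) (Pi.single j 1) := by
        refine Finset.sum_congr rfl fun i _ => ?_
        rw [hlin (b (Pi.single i 1)) y]
    _ = x ⬝ᵥ (Matrix.of fun i j => b (Pi.single i 1) (Pi.single j 1)).mulVec y := by
        simp only [Matrix.mulVec, dotProduct, Matrix.of_apply]
        refine Finset.sum_congr rfl fun i _ => ?_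
        congr 1
        refine Finset.sum_congr rfl fun j _ => mul_comm _ _

/-- Existence of a linear minimizer for each horizon. -/
lemma exists_min (hR : R.IsSymm) (hQ : Q.IsSymm)
    (hctrb : (controllabilityMatrix A B).rank = n) (N : ℕ) (hN : n ≤ N)
    (hbdd : ∀ x : Fin n → ℝ, ∃ c : ℝ, ∀ w : EuclideanSpace ℝ (Fin N × Fin m),
      finalState A B N w = x → c ≤ costQF A B C D R S Q N w) :
    ∃ G : (Fin n → ℝ) →ₗ[ℝ] EuclideanSpace ℝ (Fin N × Fin m),
      (∀ x, finalState A B N (G x) = x) ∧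
      ∀ w, costQF A B C D R S Q N (G (finalState A B N w))
        ≤ costQF A B C D R S Q N w := by
  classical
  set T := opOfBilin (costB A B C D R S Q N) with hTdef
  have hinner : ∀ v w, ⟪v, T w⟫ = costB A B C D R S Q N v w :=
    fun v w => inner_opOfBilin _ v w
  have hT : ∀ v w, ⟪T v, w⟫ = ⟪v, T w⟫ := by
    intro v w
    rw [real_inner_comm, hinner, hinner, costB_comm A B C D R S Q hR hQ]
  have hself : ∀ w, ⟪w, T w⟫ = costQF A B C D R S Q N w := by
    intro w; rw [hinner, costB_self']
  obtain ⟨G, hG1, hG2⟩ := qp_exists_linear_minimizer T hT (finalState A B N)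
    (finalState_surjective A B hctrb N hN)
    (by
      intro x
      obtain ⟨c, hc⟩ := hbdd x
      exact ⟨c, fun w hw => by rw [hself]; exact hc w hw⟩)
  refine ⟨G, hG1, fun w => ?_⟩
  rw [← hself (G (finalState A B N w)), ← hself w]
  exact hG2 w

end LMIProof

set_option maxHeartbeats 1000000 in
theorem dissipative_controllable_implies_lmi {n m p : ℕ}
    (A : Matrix (Fin n) (Fin n) ℝ) (B : Matrix (Fin n) (Fin m) ℝ)
    (C : Matrix (Fin p) (Fin n) ℝ) (D : Matrix (Fin p) (Fin m) ℝ)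
    (R : Matrix (Fin m) (Fin m) ℝ) (S : Matrix (Fin p) (Fin m) ℝ)
    (Q : Matrix (Fin p) (Fin p) ℝ) (hR : R.IsSymm) (hQ : Q.IsSymm)
    (hctrb : (controllabilityMatrix A B).rank = n)
    (hdiss : ∃ V : (Fin n → ℝ) → ℝ,
      ∀ (u : ℕ → Fin m → ℝ) (x : ℕ → Fin n → ℝ),
        (∀ k : ℕ, x (k + 1) = A.mulVec (x k) + B.mulVec (u k)) →
        ∀ k₂ k₁ : ℕ, k₂ < k₁ →
          V (x k₁) - V (x k₂)
            ≤ ∑ i ∈ Finset.Ico k₂ k₁,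
                supplyRate R S Q (u i) (C.mulVec (x i) + D.mulVec (u i))) :
    ∃ P : Matrix (Fin n) (Fin n) ℝ, P.IsSymm ∧
      (dissipationMatrix A B C D R S Q P).NegSemidef := by
  classical
  obtain ⟨V, hV⟩ := hdiss
  -- lower bound from dissipativity
  have hlb : ∀ (N : ℕ), 1 ≤ N → ∀ w : EuclideanSpace ℝ (Fin N × Fin m),
      V (LMIProof.finalState A B N w) - V 0
        ≤ LMIProof.costQF A B C D R S Q N w := by
    intro N hN w
    have hrec : ∀ k : ℕ, LMIProof.traj A B (LMIProof.extIn N w) (k+1)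
        = A.mulVec (LMIProof.traj A B (LMIProof.extIn N w) k)
          + B.mulVec (LMIProof.extIn N w k) := fun k => rfl
    have h := hV (LMIProof.extIn N w) (LMIProof.traj A B (LMIProof.extIn N w)) hrec 0 N hN
    have h0 : LMIProof.traj A B (LMIProof.extIn N w) 0 = 0 := rfl
    rw [h0] at h
    simp only [LMIProof.costQF, LMIProof.outSig, Finset.range_eq_Ico]
    rw [LMIProof.finalState_apply]
    exact h
  -- horizons
  set H : ℕ → ℕ := fun t => n + t + 1 with hH
  have hHn : ∀ t, n ≤ H t := fun t => by show n ≤ n + t + 1; omega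
  have hH1 : ∀ t, 1 ≤ H t := fun t => by show 1 ≤ n + t + 1; omega
  -- linear minimizers for each horizon
  have hGex : ∀ t : ℕ, ∃ G : (Fin n → ℝ) →ₗ[ℝ] EuclideanSpace ℝ (Fin (H t) × Fin m),
      (∀ x, LMIProof.finalState A B (H t) (G x) = x) ∧
      ∀ w, LMIProof.costQF A B C D R S Q (H t) (G (LMIProof.finalState A B (H t) w))
        ≤ LMIProof.costQF A B C D R S Q (H t) w := by
    intro t
    apply LMIProof.exists_min A B C D R S Q hR hQ hctrb (H t) (hHn t)
    intro x
    refine ⟨V x - V 0, fun w hw => ?_⟩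
    have := hlb (H t) (hH1 t) w
    rwa [hw] at this
  choose G hG1 hG2 using hGex
  -- the value functions
  set v : ℕ → (Fin n → ℝ) → ℝ :=
    fun t x => LMIProof.costQF A B C D R S Q (H t) (G t x) with hv
  have hvlb : ∀ t x, V x - V 0 ≤ v t x := by
    intro t x
    have := hlb (H t) (hH1 t) (G t x)
    rwa [hG1 t x] at this
  have hant : ∀ t x, v (t+1) x ≤ v t x := by
    intro t x
    obtain ⟨w', hw1, hw2⟩ := LMIProof.prepend_step A B C D R S Q (H t) (G t x)
    have hfs : LMIProof.finalState A B (H (t+1)) w' = x := by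
      have h' : LMIProof.finalState A B (H t + 1) w' = x := by rw [hw1, hG1]
      exact h'
    calc v (t+1) x
        = LMIProof.costQF A B C D R S Q (H (t+1))
            (G (t+1) (LMIProof.finalState A B (H (t+1)) w')) := by rw [hfs]
      _ ≤ LMIProof.costQF A B C D R S Q (H (t+1)) w' := hG2 (t+1) w'
      _ = v t x := hw2
  have hstep : ∀ (t : ℕ) (x : Fin n → ℝ) (u : Fin m → ℝ),
      v (t+1) (A.mulVec x + B.mulVec u)
        ≤ v t x + supplyRate R S Q u (C.mulVec x + D.mulVec u) := by
    intro t x u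
    obtain ⟨w', hw1, hw2⟩ := LMIProof.append_step A B C D R S Q (H t) (G t x) u
    rw [hG1 t x] at hw1 hw2
    have hfs : LMIProof.finalState A B (H (t+1)) w' = A.mulVec x + B.mulVec u := hw1
    calc v (t+1) (A.mulVec x + B.mulVec u)
        = LMIProof.costQF A B C D R S Q (H (t+1))
            (G (t+1) (LMIProof.finalState A B (H (t+1)) w')) := by rw [hfs]
      _ ≤ LMIProof.costQF A B C D R S Q (H (t+1)) w' := hG2 (t+1) w'
      _ = v t x + supplyRate R S Q u (C.mulVec x + D.mulVec u) := hw2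
  -- limits
  set vl : (Fin n → ℝ) → ℝ := fun x => ⨅ t, v t x with hvl
  have htend : ∀ x, Filter.Tendsto (fun t => v t x) Filter.atTop (nhds (vl x)) := by
    intro x
    apply tendsto_atTop_ciInf
    · exact antitone_nat_of_succ_le (fun t => hant t x)
    · exact ⟨V x - V 0, by rintro _ ⟨t, rfl⟩; exact hvlb t x⟩
  -- the matrices of the value functions
  set Pt : ℕ → Matrix (Fin n) (Fin n) ℝ := fun t => Matrix.of fun i j =>
    LMIProof.costB A B C D R S Q (H t) (G t (Pi.single i 1)) (G t (Pi.single j 1)) with hPt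
  have hquad : ∀ t x, v t x = x ⬝ᵥ (Pt t).mulVec x := by
    intro t x
    have h1 : v t x = ((LMIProof.costB A B C D R S Q (H t)).compl₁₂ (G t) (G t)) x x := by
      rw [LinearMap.compl₁₂_apply]
      exact (LMIProof.costB_self' A B C D R S Q (H t) (G t x)).symm
    rw [h1, LMIProof.bilin_eq_matrix]
    have h2 : (Matrix.of fun i j =>
        ((LMIProof.costB A B C D R S Q (H t)).compl₁₂ (G t) (G t))
          (Pi.single i 1) (Pi.single j 1)) = Pt t := by
      ext i j
      simp only [Matrix.of_apply, LinearMap.compl₁₂_apply, hPt]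
    rw [h2]
  have hPtv : ∀ t i j, Pt t i j = (v t (Pi.single i 1 + Pi.single j 1)
      - v t (Pi.single i 1) - v t (Pi.single j 1)) / 2 := by
    intro t i j
    have e1 : v t (Pi.single i 1) = LMIProof.costB A B C D R S Q (H t)
        (G t (Pi.single i 1)) (G t (Pi.single i 1)) :=
      (LMIProof.costB_self' A B C D R S Q (H t) _).symm
    have e2 : v t (Pi.single j 1) = LMIProof.costB A B C D R S Q (H t)
        (G t (Pi.single j 1)) (G t (Pi.single j 1)) :=
      (LMIProof.costB_self' A B C D R S Q (H t) _).symm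
    have e3 : v t (Pi.single i 1 + Pi.single j 1) = LMIProof.costB A B C D R S Q (H t)
        (G t (Pi.single i 1) + G t (Pi.single j 1))
        (G t (Pi.single i 1) + G t (Pi.single j 1)) := by
      rw [← map_add]
      exact (LMIProof.costB_self' A B C D R S Q (H t) _).symm
    have e4 : LMIProof.costB A B C D R S Q (H t)
        (G t (Pi.single i 1) + G t (Pi.single j 1))
        (G t (Pi.single i 1) + G t (Pi.single j 1))
        = LMIProof.costB A B C D R S Q (H t) (G t (Pi.single i 1)) (G t (Pi.single i 1))
          + 2 * LMIProof.costB A B C D R S Q (H t) (G t (Pi.single i 1)) (G t (Pi.single j 1))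
          + LMIProof.costB A B C D R S Q (H t) (G t (Pi.single j 1)) (G t (Pi.single j 1)) := by
      simp only [map_add, LinearMap.add_apply]
      rw [LMIProof.costB_comm A B C D R S Q hR hQ (H t)
          (G t (Pi.single j 1)) (G t (Pi.single i 1))]
      ring
    have e5 : Pt t i j = LMIProof.costB A B C D R S Q (H t)
        (G t (Pi.single i 1)) (G t (Pi.single j 1)) := rfl
    rw [e5, e3, e4, e1, e2]
    ring
  -- the limit matrix
  set P : Matrix (Fin n) (Fin n) ℝ := Matrix.of fun i j =>
    (vl (Pi.single i 1 + Pi.single j 1) - vl (Pi.single i 1) - vl (Pi.single j 1)) / 2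
    with hPdef
  have hPttend : ∀ i j, Filter.Tendsto (fun t => Pt t i j) Filter.atTop (nhds (P i j)) := by
    intro i j
    have h1 : Filter.Tendsto (fun t => (v t (Pi.single i 1 + Pi.single j 1)
        - v t (Pi.single i 1) - v t (Pi.single j 1)) / 2) Filter.atTop
        (nhds ((vl (Pi.single i 1 + Pi.single j 1) - vl (Pi.single i 1)
          - vl (Pi.single j 1)) / 2)) :=
      (((htend _).sub (htend _)).sub (htend _)).div_const 2
    exact Filter.Tendsto.congr (fun t => (hPtv t i j).symm) h1
  have hvlquad : ∀ x, vl x = x ⬝ᵥ P.mulVec x := by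
    intro x
    have hexp : ∀ (M : Matrix (Fin n) (Fin n) ℝ),
        x ⬝ᵥ M.mulVec x = ∑ i, x i * ∑ j, M i j * x j := by
      intro M
      simp [Matrix.mulVec, dotProduct]
    have h2 : Filter.Tendsto (fun t => x ⬝ᵥ (Pt t).mulVec x) Filter.atTop
        (nhds (x ⬝ᵥ P.mulVec x)) := by
      simp only [hexp]
      apply tendsto_finset_sum
      intro i _
      apply Filter.Tendsto.const_mul
      apply tendsto_finset_sum
      intro j _
      exact (hPttend i j).mul_const (x j)
    exact tendsto_nhds_unique ((htend x).congr (fun t => hquad t x)) h2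
  -- limit dissipation inequality
  have hdissP : ∀ (x : Fin n → ℝ) (u : Fin m → ℝ),
      (A.mulVec x + B.mulVec u) ⬝ᵥ P.mulVec (A.mulVec x + B.mulVec u)
        ≤ x ⬝ᵥ P.mulVec x + supplyRate R S Q u (C.mulVec x + D.mulVec u) := by
    intro x u
    have hL : Filter.Tendsto (fun t => v (t+1) (A.mulVec x + B.mulVec u)) Filter.atTop
        (nhds (vl (A.mulVec x + B.mulVec u))) :=
      (htend _).comp (Filter.tendsto_add_atTop_nat 1)
    have hRt : Filter.Tendsto
        (fun t => v t x + supplyRate R S Q u (C.mulVec x + D.mulVec u)) Filter.atTop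
        (nhds (vl x + supplyRate R S Q u (C.mulVec x + D.mulVec u))) :=
      (htend x).add_const _
    have h := le_of_tendsto_of_tendsto' hL hRt (fun t => hstep t x u)
    rwa [hvlquad, hvlquad] at h
  -- symmetry
  have hPsymm : P.IsSymm := by
    rw [Matrix.IsSymm]
    ext i j
    simp only [Matrix.transpose_apply, hPdef, Matrix.of_apply]
    rw [add_comm (Pi.single j 1)]
    ring
  exact ⟨P, hPsymm,
    LMIKey.kp_negSemidef A B C D R S Q P hPsymm.eq hQ.eq hR.eq hdissP⟩
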